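/- Suppose ν ∈ ℝ^m and μ ∈ ℝ^n have all entries strictly positive and T_E(ν,μ) is nonempty, with CRP decomposition (I_l ∪ J_l)_{l=1,…,d} and CRP-graph relation R. Let (i,j) ∈ (I × J) ∖ E, and let l₁, l₂ ∈ {1,…,d} be such that i ∈ I_{l₁} and j ∈ J_{l₂}. Define the relation R′ by R′(a,b) ⟺ R(a,b) ∨ (a = l₁ ∧ b = l₂ ∧ l₁ ≠ l₂), and let V_c = {l ∈ {1,…,d} : the transitive closure of R′ relates l to itself}. Then the ERP number of T_{E∪{(i,j)}}(ν,μ) equals d − max(|V_c| − 1, 0). -/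

import Mathlib

open scoped Classical

noncomputable section

variable {m n : ℕ}

/-- The transportation polytope `T_E(ν,μ)`: nonnegative `m × n` matrices with row sums `ν`,
column sums `μ`, supported on the edge set `E`. -/
def transportationPolytope (ν : Fin m → ℝ) (μ : Fin n → ℝ)
    (E : Finset (Fin m × Fin n)) : Set (Fin m → Fin n → ℝ) :=
  {x | (∀ i j, 0 ≤ x i j) ∧ (∀ i, ∑ j, x i j = ν i) ∧
    (∀ j, ∑ i, x i j = μ j) ∧ ∀ i j, (i, j) ∉ E → x i j = 0}

/-- The neighborhood `N_F(S) = {j : ∃ i ∈ S, (i,j) ∈ F}`. -/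
def nbr (F : Finset (Fin m × Fin n)) (S : Finset (Fin m)) : Finset (Fin n) :=
  Finset.univ.filter fun j => ∃ i ∈ S, (i, j) ∈ F

/-- `ν` satisfies the capacity condition for `(μ, E)`. -/
def capacityCond (ν : Fin m → ℝ) (μ : Fin n → ℝ) (E : Finset (Fin m × Fin n)) : Prop :=
  ∀ S : Finset (Fin m), ∑ i ∈ S, ν i ≤ ∑ j ∈ nbr E S, μ j

/-- The CRP condition for `(ν, μ, E)`. -/
def crpCond (ν : Fin m → ℝ) (μ : Fin n → ℝ) (E : Finset (Fin m × Fin n)) : Prop :=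
  (∑ i, ν i) = (∑ j, μ j) ∧
  ∀ S : Finset (Fin m), S.Nonempty → S ≠ Finset.univ →
    ∑ i ∈ S, ν i < ∑ j ∈ nbr E S, μ j

/-- The bipartite simple graph `G(F)` on `I ⊔ J` determined by the edge set `F`. -/
def bipartiteGraph (F : Finset (Fin m × Fin n)) : SimpleGraph (Fin m ⊕ Fin n) :=
  SimpleGraph.fromRel fun u v => ∃ i j, u = Sum.inl i ∧ v = Sum.inr j ∧ (i, j) ∈ F

/-- The number of connected components of `G(F)`. -/
def numComponents (F : Finset (Fin m × Fin n)) : ℕ :=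
  Nat.card (bipartiteGraph F).ConnectedComponent

/-- The set `E_r` of redundant edges of `T_E(ν,μ)`. -/
def redundantEdges (ν : Fin m → ℝ) (μ : Fin n → ℝ)
    (E : Finset (Fin m × Fin n)) : Finset (Fin m × Fin n) :=
  E.filter fun e => ∀ x ∈ transportationPolytope ν μ E, x e.1 e.2 = 0

/-- The ERP number of `T_E(ν,μ)`: the number of connected components of `G(E ∖ E_r)`. -/
def erpNumber (ν : Fin m → ℝ) (μ : Fin n → ℝ) (E : Finset (Fin m × Fin n)) : ℕ :=
  numComponents (E \ redundantEdges ν μ E)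

/-- The support edge set `B(x) = {(i,j) ∈ E : x_{ij} > 0}`. -/
def supportEdges (E : Finset (Fin m × Fin n)) (x : Fin m → Fin n → ℝ) :
    Finset (Fin m × Fin n) :=
  E.filter fun e => 0 < x e.1 e.2

/-- The indicator vector `𝟙_S ∈ ℝ^m` of `S ⊆ I`. -/
def indicatorVec (S : Finset (Fin m)) : Fin m → ℝ := fun i => if i ∈ S then 1 else 0

/-- `S ⊆ I` is binding if `∑_{i∈S} ν_i = ∑_{j∈N_E(S)} μ_j`. -/
def IsBinding (ν : Fin m → ℝ) (μ : Fin n → ℝ) (E : Finset (Fin m × Fin n))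
    (S : Finset (Fin m)) : Prop :=
  (∑ i ∈ S, ν i) = ∑ j ∈ nbr E S, μ j

/-- The greatest common divisor of all `m + n` components of `ν` and `μ`. -/
def gcdVec (ν : Fin m → ℕ) (μ : Fin n → ℕ) : ℕ :=
  Nat.gcd (Finset.univ.gcd ν) (Finset.univ.gcd μ)

/-- `d_⋆ = max {1, m + n − (∑ᵢ νᵢ) / gcd(ν,μ)}`. -/
def dStar (ν : Fin m → ℕ) (μ : Fin n → ℕ) : ℕ :=
  max 1 (m + n - (∑ i, ν i) / gcdVec ν μ)

/-- The CRP-gap `δ_F(ν,μ)` of the edge set `F` (computed with respect to the redundant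
edges of `T_F(ν,μ)`). -/
def crpGap (ν : Fin m → ℝ) (μ : Fin n → ℝ) (F : Finset (Fin m × Fin n)) : ℝ :=
  sInf {t : ℝ | ∃ C : Finset (Fin m),
    (∑ i ∈ C, ν i) < (∑ j ∈ nbr (F \ redundantEdges ν μ F) C, μ j) ∧
    t = (∑ j ∈ nbr F C, μ j) - ∑ i ∈ C, ν i}

/-- The CRP-graph relation `R` on the connected components of `G(E ∖ E_r)`:
`R c₁ c₂` holds iff `c₁ ≠ c₂` and some edge `(i,j) ∈ E` has `i` in the demand side of `c₁`
and `j` in the supply side of `c₂`. -/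
def crpRel (ν : Fin m → ℝ) (μ : Fin n → ℝ) (E : Finset (Fin m × Fin n)) :
    (bipartiteGraph (E \ redundantEdges ν μ E)).ConnectedComponent →
    (bipartiteGraph (E \ redundantEdges ν μ E)).ConnectedComponent → Prop :=
  fun c₁ c₂ => c₁ ≠ c₂ ∧ ∃ i j, (i, j) ∈ E ∧
    (bipartiteGraph (E \ redundantEdges ν μ E)).connectedComponentMk (Sum.inl i) = c₁ ∧
    (bipartiteGraph (E \ redundantEdges ν μ E)).connectedComponentMk (Sum.inr j) = c₂

end

namespace Stmt16
open Relation Finset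

variable {m n : ℕ}

noncomputable def eMat (a : Fin m) (b : Fin n) : Fin m → Fin n → ℝ :=
  fun p q => if p = a ∧ q = b then 1 else 0

lemma eMat_nonneg (a : Fin m) (b : Fin n) (p : Fin m) (q : Fin n) : 0 ≤ eMat a b p q := by
  unfold eMat; split <;> norm_num

lemma exists_fullSupport (ν : Fin m → ℝ) (μ : Fin n → ℝ) (E : Finset (Fin m × Fin n))
    (hFne : (E \ redundantEdges ν μ E).Nonempty) :
    ∃ x ∈ transportationPolytope ν μ E,
      ∀ a b, ((a, b) ∈ E \ redundantEdges ν μ E ↔ 0 < x a b) := by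
  set F := E \ redundantEdges ν μ E with hF
  have hwit : ∀ f ∈ F, ∃ x, x ∈ transportationPolytope ν μ E ∧ 0 < x f.1 f.2 := by
    intro f hf
    rw [hF, Finset.mem_sdiff] at hf
    obtain ⟨hfE, hfr⟩ := hf
    rw [redundantEdges, Finset.mem_filter] at hfr
    push_neg at hfr
    obtain ⟨x, hx, hxf⟩ := hfr hfE
    exact ⟨x, hx, lt_of_le_of_ne (hx.1 f.1 f.2) (Ne.symm hxf)⟩
  choose g hg1 hg2 using hwit
  set x : Fin m → Fin n → ℝ :=
    fun a b => (F.card : ℝ)⁻¹ * ∑ f ∈ F.attach, g f.1 f.2 a b with hx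
  have hcard : (0 : ℝ) < (F.card : ℝ) := by
    exact_mod_cast Finset.card_pos.2 hFne
  have hsum : ∀ (h : Fin m → Fin n → ℝ → ℝ), True := fun _ => trivial
  have hxmem : x ∈ transportationPolytope ν μ E := by
    refine ⟨?_, ?_, ?_, ?_⟩
    · intro a b
      apply mul_nonneg (by positivity)
      exact Finset.sum_nonneg fun f _ => (hg1 f.1 f.2).1 a b
    · intro a
      rw [hx]
      simp only
      rw [← Finset.mul_sum, Finset.sum_comm]
      have : ∀ f ∈ F.attach, ∑ b, g f.1 f.2 a b = ν a := fun f _ => (hg1 f.1 f.2).2.1 a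
      rw [Finset.sum_congr rfl this, Finset.sum_const, Finset.card_attach, nsmul_eq_mul]
      field_simp
    · intro b
      rw [hx]
      simp only
      rw [← Finset.mul_sum, Finset.sum_comm]
      have : ∀ f ∈ F.attach, ∑ a, g f.1 f.2 a b = μ b := fun f _ => (hg1 f.1 f.2).2.2.1 b
      rw [Finset.sum_congr rfl this, Finset.sum_const, Finset.card_attach, nsmul_eq_mul]
      field_simp
    · intro a b hab
      rw [hx]
      simp only
      rw [Finset.sum_congr rfl fun f _ => (hg1 f.1 f.2).2.2.2 a b hab]
      simp
  refine ⟨x, hxmem, fun a b => ⟨fun hab => ?_, fun hab => ?_⟩⟩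
  · apply mul_pos (by positivity)
    apply Finset.sum_pos' (fun f _ => (hg1 f.1 f.2).1 a b)
    exact ⟨⟨(a, b), hab⟩, Finset.mem_attach _ _, hg2 (a, b) hab⟩
  · by_contra hnab
    have hz : ∀ f ∈ F.attach, g f.1 f.2 a b = 0 := by
      intro f _
      by_cases habE : (a, b) ∈ E
      · have : (a, b) ∈ redundantEdges ν μ E := by
          rw [hF] at hnab
          rw [Finset.mem_sdiff] at hnab
          tauto
        rw [redundantEdges, Finset.mem_filter] at this
        exact this.2 _ (hg1 f.1 f.2)
      · exact (hg1 f.1 f.2).2.2.2 a b habE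
    rw [hx] at hab
    simp only at hab
    rw [Finset.sum_congr rfl hz] at hab
    simp at hab


def divg (y : Fin m → Fin n → ℝ) : Fin m ⊕ Fin n → ℝ :=
  Sum.elim (fun a => ∑ b, y a b) (fun b => ∑ a, y a b)

noncomputable def dl (u : Fin m ⊕ Fin n) : (Fin m ⊕ Fin n) → ℝ := fun v => if v = u then 1 else 0

def sgn : Fin m ⊕ Fin n → ℝ := Sum.elim (fun _ => 1) (fun _ => -1)

lemma divg_add (y z : Fin m → Fin n → ℝ) (w : Fin m ⊕ Fin n) :
    divg (fun a b => y a b + z a b) w = divg y w + divg z w := by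
  cases w <;> simp [divg, Finset.sum_add_distrib]

lemma divg_neg (y : Fin m → Fin n → ℝ) (w : Fin m ⊕ Fin n) :
    divg (fun a b => -(y a b)) w = -(divg y w) := by
  cases w <;> simp [divg, Finset.sum_neg_distrib]

lemma divg_zero (w : Fin m ⊕ Fin n) : divg (fun _ _ => (0:ℝ)) w = 0 := by
  cases w <;> simp [divg]

lemma divg_eMat (a : Fin m) (b : Fin n) (w : Fin m ⊕ Fin n) :
    divg (eMat a b) w = dl (Sum.inl a) w + dl (Sum.inr b) w := by
  cases w with
  | inl p =>
    simp only [divg, Sum.elim_inl, eMat, dl]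
    by_cases h : p = a <;> simp [h, Sum.inl.injEq]
  | inr q =>
    simp only [divg, Sum.elim_inr, eMat, dl]
    by_cases h : q = b <;> simp [h, Sum.inr.injEq]

lemma bip_adj' {F : Finset (Fin m × Fin n)} {u v : Fin m ⊕ Fin n} :
    (bipartiteGraph F).Adj u v ↔ ∃ a b, (a, b) ∈ F ∧
      ((u = Sum.inl a ∧ v = Sum.inr b) ∨ (u = Sum.inr b ∧ v = Sum.inl a)) := by
  unfold bipartiteGraph
  rw [SimpleGraph.fromRel_adj]
  constructor
  · rintro ⟨hne, h | h⟩ <;> obtain ⟨a, b, h1, h2, h3⟩ := h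
    · exact ⟨a, b, h3, Or.inl ⟨h1, h2⟩⟩
    · exact ⟨a, b, h3, Or.inr ⟨h2, h1⟩⟩
  · rintro ⟨a, b, hf, ⟨h1, h2⟩ | ⟨h1, h2⟩⟩
    · exact ⟨by simp [h1, h2], Or.inl ⟨a, b, h1, h2, hf⟩⟩
    · exact ⟨by simp [h1, h2], Or.inr ⟨a, b, h2, h1, hf⟩⟩

lemma transfer_walk {F : Finset (Fin m × Fin n)} {u v : Fin m ⊕ Fin n}
    (p : (bipartiteGraph F).Walk u v) :
    ∃ y : Fin m → Fin n → ℝ, (∀ a b, (a, b) ∉ F → y a b = 0) ∧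
      ∀ w, divg y w = sgn u * dl u w - sgn v * dl v w := by
  induction p with
  | nil => exact ⟨fun _ _ => 0, fun _ _ _ => rfl, fun w => by rw [divg_zero]; ring⟩
  | @cons u u' v hadj p ih =>
    obtain ⟨y₂, hy₂s, hy₂d⟩ := ih
    rw [bip_adj'] at hadj
    obtain ⟨a, b, hab, ⟨h1, h2⟩ | ⟨h1, h2⟩⟩ := hadj
    · refine ⟨fun p q => eMat a b p q + y₂ p q, ?_, ?_⟩
      · intro p q hpq
        have he : eMat a b p q = 0 := by
          unfold eMat; rw [if_neg]; rintro ⟨rfl, rfl⟩; exact hpq hab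
        simp only [he, hy₂s p q hpq, add_zero]
      · intro w
        rw [divg_add, divg_eMat, hy₂d w, h1, h2]
        simp [sgn]
        ring
    · refine ⟨fun p q => -(eMat a b p q) + y₂ p q, ?_, ?_⟩
      · intro p q hpq
        have he : eMat a b p q = 0 := by
          unfold eMat; rw [if_neg]; rintro ⟨rfl, rfl⟩; exact hpq hab
        simp only [he, hy₂s p q hpq]; ring
      · intro w
        have : divg (fun p q => -(eMat a b p q) + y₂ p q) w
            = divg (fun p q => -(eMat a b p q)) w + divg y₂ w := divg_add _ _ w
        rw [this, divg_neg, divg_eMat, hy₂d w, h1, h2]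
        simp [sgn]
        ring

def stepRel (F K : Finset (Fin m × Fin n)) (u v : Fin m ⊕ Fin n) : Prop :=
  (bipartiteGraph F).Adj u v ∨ ∃ a b, u = Sum.inl a ∧ v = Sum.inr b ∧ (a, b) ∈ K

lemma reach_step {F K : Finset (Fin m × Fin n)} {u v : Fin m ⊕ Fin n}
    (h : (bipartiteGraph F).Reachable u v) : ReflTransGen (stepRel F K) u v := by
  obtain ⟨p⟩ := h
  induction p with
  | nil => exact ReflTransGen.refl
  | cons hadj p ih => exact ReflTransGen.head (Or.inl hadj) ih

lemma step_vec {F K : Finset (Fin m × Fin n)} (hFK : F ⊆ K) {u v : Fin m ⊕ Fin n}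
    (h : ReflTransGen (stepRel F K) u v) :
    ∃ y : Fin m → Fin n → ℝ,
      (∀ a b, (a, b) ∉ K → y a b = 0) ∧
      (∀ a b, (a, b) ∉ F → 0 ≤ y a b) ∧
      ∀ w, divg y w = sgn u * dl u w - sgn v * dl v w := by
  induction h with
  | refl => exact ⟨fun _ _ => 0, fun _ _ _ => rfl, fun _ _ _ => le_refl 0,
      fun w => by rw [divg_zero]; ring⟩
  | @tail c d huc hstep ih =>
    obtain ⟨y₂, hy₂K, hy₂F, hy₂d⟩ := ih
    rcases hstep with hadj | ⟨a, b, rfl, rfl, hab⟩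
    · obtain ⟨p⟩ := hadj.reachable
      obtain ⟨y₁, hy₁s, hy₁d⟩ := transfer_walk p
      refine ⟨fun p q => y₂ p q + y₁ p q, ?_, ?_, ?_⟩
      · intro p q hpq
        simp only [hy₂K p q hpq, hy₁s p q (fun hF => hpq (hFK hF)), add_zero]
      · intro p q hpq
        simp only [hy₁s p q hpq, add_zero]; exact hy₂F p q hpq
      · intro w
        rw [divg_add, hy₂d w, hy₁d w]; ring
    · refine ⟨fun p q => y₂ p q + eMat a b p q, ?_, ?_, ?_⟩
      · intro p q hpq
        have he : eMat a b p q = 0 := by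
          unfold eMat; rw [if_neg]; rintro ⟨rfl, rfl⟩; exact hpq hab
        simp only [hy₂K p q hpq, he, add_zero]
      · intro p q hpq
        exact add_nonneg (hy₂F p q hpq) (eMat_nonneg a b p q)
      · intro w
        rw [divg_add, hy₂d w, divg_eMat]
        simp [sgn]
        ring


lemma poly_mono {ν : Fin m → ℝ} {μ : Fin n → ℝ} {E K : Finset (Fin m × Fin n)} (hEK : E ⊆ K) :
    transportationPolytope ν μ E ⊆ transportationPolytope ν μ K := by
  rintro x ⟨h0, hr, hc, hz⟩
  exact ⟨h0, hr, hc, fun a b hab => hz a b (fun h => hab (hEK h))⟩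

lemma nonredundant_iff (hm : 1 ≤ m) (hn : 1 ≤ n) (ν : Fin m → ℝ) (μ : Fin n → ℝ)
    (E K : Finset (Fin m × Fin n)) (hEK : E ⊆ K)
    (x : Fin m → Fin n → ℝ) (hx : x ∈ transportationPolytope ν μ E)
    (hxs : ∀ a b, ((a, b) ∈ E \ redundantEdges ν μ E ↔ 0 < x a b))
    (f : Fin m × Fin n) (hfK : f ∈ K) :
    (∃ z ∈ transportationPolytope ν μ K, 0 < z f.1 f.2) ↔
      ReflTransGen (stepRel (E \ redundantEdges ν μ E) K) (Sum.inr f.2) (Sum.inl f.1) := by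
  set F := E \ redundantEdges ν μ E with hF
  have hFE : F ⊆ E := Finset.sdiff_subset
  have hFK : F ⊆ K := hFE.trans hEK
  obtain ⟨hx0, hxr, hxc, hxz⟩ := hx
  constructor
  · -- necessity
    rintro ⟨z, ⟨hz0, hzr, hzc, hzz⟩, hzf⟩
    by_contra hnr
    set A : Set (Fin m ⊕ Fin n) := {u | ReflTransGen (stepRel F K) (Sum.inr f.2) u} with hA
    set AI : Finset (Fin m) := Finset.univ.filter (fun a => Sum.inl a ∈ A) with hAI
    set AJ : Finset (Fin n) := Finset.univ.filter (fun b => Sum.inr b ∈ A) with hAJ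
    have hf2 : f.2 ∈ AJ := by
      simp only [hAJ, Finset.mem_filter, Finset.mem_univ, true_and]
      exact ReflTransGen.refl
    have hf1 : f.1 ∉ AI := by
      simp only [hAI, Finset.mem_filter, Finset.mem_univ, true_and]
      exact hnr
    have hc1 : ∀ a b, (a, b) ∈ K → a ∈ AI → b ∈ AJ := by
      intro a b hab ha
      simp only [hAI, Finset.mem_filter, Finset.mem_univ, true_and] at ha
      simp only [hAJ, Finset.mem_filter, Finset.mem_univ, true_and]
      exact ha.tail (Or.inr ⟨a, b, rfl, rfl, hab⟩)
    have hc2f : ∀ a b, (a, b) ∈ F → a ∈ AI → b ∈ AJ := by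
      intro a b hab ha
      simp only [hAI, Finset.mem_filter, Finset.mem_univ, true_and] at ha
      simp only [hAJ, Finset.mem_filter, Finset.mem_univ, true_and]
      refine ha.tail (Or.inl ?_)
      rw [bip_adj']
      exact ⟨a, b, hab, Or.inl ⟨rfl, rfl⟩⟩
    have hc2b : ∀ a b, (a, b) ∈ F → b ∈ AJ → a ∈ AI := by
      intro a b hab hb
      simp only [hAJ, Finset.mem_filter, Finset.mem_univ, true_and] at hb
      simp only [hAI, Finset.mem_filter, Finset.mem_univ, true_and]
      refine hb.tail (Or.inl ?_)
      rw [bip_adj']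
      exact ⟨a, b, hab, Or.inr ⟨rfl, rfl⟩⟩
    -- equality for x
    have hxeq : ∑ b ∈ AJ, μ b = ∑ a ∈ AI, ν a := by
      have h1 : ∑ b ∈ AJ, μ b = ∑ b ∈ AJ, ∑ a, x a b :=
        Finset.sum_congr rfl (fun b _ => (hxc b).symm)
      have h2 : ∀ b ∈ AJ, ∑ a, x a b = ∑ a ∈ AI, x a b := by
        intro b hb
        refine (Finset.sum_subset (Finset.subset_univ _) ?_).symm
        intro a _ ha
        by_contra hne
        have hpos : 0 < x a b := lt_of_le_of_ne (hx0 a b) (Ne.symm hne)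
        exact ha (hc2b a b ((hxs a b).2 hpos) hb)
      have h3 : ∀ a ∈ AI, ∑ b ∈ AJ, x a b = ν a := by
        intro a ha
        rw [Finset.sum_subset (Finset.subset_univ _) ?_]
        · exact hxr a
        · intro b _ hb
          by_contra hne
          have hpos : 0 < x a b := lt_of_le_of_ne (hx0 a b) (Ne.symm hne)
          exact hb (hc2f a b ((hxs a b).2 hpos) ha)
      rw [h1, Finset.sum_congr rfl h2, Finset.sum_comm, Finset.sum_congr rfl h3]
    -- inequality for z
    have hzineq : ∑ a ∈ AI, ν a + z f.1 f.2 ≤ ∑ b ∈ AJ, μ b := by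
      have h1 : ∑ b ∈ AJ, μ b = ∑ a, ∑ b ∈ AJ, z a b := by
        rw [Finset.sum_comm]
        exact Finset.sum_congr rfl (fun b _ => (hzc b).symm)
      have h3 : ∀ a ∈ AI, ∑ b ∈ AJ, z a b = ν a := by
        intro a ha
        rw [Finset.sum_subset (Finset.subset_univ _) ?_]
        · exact hzr a
        · intro b _ hb
          by_contra hne
          have : (a, b) ∈ K := by
            by_contra hK; exact hne (hzz a b hK)
          exact hb (hc1 a b this ha)
      set BI : Finset (Fin m) := Finset.univ.filter (fun a => Sum.inl a ∉ A) with hBI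
      have h4 : ∑ a, ∑ b ∈ AJ, z a b
          = ∑ a ∈ AI, ∑ b ∈ AJ, z a b + ∑ a ∈ BI, ∑ b ∈ AJ, z a b := by
        rw [hAI, hBI]
        rw [Finset.sum_filter_add_sum_filter_not Finset.univ (fun a => Sum.inl a ∈ A)
          (fun a => ∑ b ∈ AJ, z a b)]
      have h5 : z f.1 f.2 ≤ ∑ a ∈ BI, ∑ b ∈ AJ, z a b := by
        have hf1' : f.1 ∈ BI := by
          simp only [hBI, Finset.mem_filter, Finset.mem_univ, true_and]
          simpa only [hAI, Finset.mem_filter, Finset.mem_univ, true_and] using hf1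
        calc z f.1 f.2 ≤ ∑ b ∈ AJ, z f.1 b :=
              Finset.single_le_sum (fun b _ => hz0 f.1 b) hf2
          _ ≤ ∑ a ∈ BI, ∑ b ∈ AJ, z a b :=
              Finset.single_le_sum
                (fun a _ => Finset.sum_nonneg (fun b _ => hz0 a b)) hf1'
      rw [h1, h4, Finset.sum_congr rfl h3]
      linarith
    rw [hxeq] at hzineq
    linarith
  · -- sufficiency
    intro hreach
    by_cases hfF : f ∈ F
    · exact ⟨x, ⟨hx0, hxr, hxc, fun a b hab => hxz a b (fun h => hab (hEK h))⟩,
        (hxs f.1 f.2).1 hfF⟩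
    obtain ⟨y, hyK, hyF, hyd⟩ := step_vec hFK hreach
    set w : Fin m → Fin n → ℝ := fun p q => eMat f.1 f.2 p q + y p q with hw
    have hwd : ∀ u, divg w u = 0 := by
      intro u
      rw [hw, divg_add, divg_eMat, hyd u]
      simp only [sgn, Sum.elim_inl, Sum.elim_inr]
      ring
    have hwf : 1 ≤ w f.1 f.2 := by
      have : eMat f.1 f.2 f.1 f.2 = 1 := by unfold eMat; simp
      have hy0 : 0 ≤ y f.1 f.2 := hyF f.1 f.2 hfF
      simp only [hw, this]
      linarith
    have hwK : ∀ a b, (a, b) ∉ K → w a b = 0 := by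
      intro a b hab
      have he : eMat f.1 f.2 a b = 0 := by
        unfold eMat; rw [if_neg]; rintro ⟨rfl, rfl⟩
        exact hab hfK
      simp only [hw, he, hyK a b hab, add_zero]
    have hwF : ∀ a b, (a, b) ∉ F → 0 ≤ w a b := by
      intro a b hab
      exact add_nonneg (eMat_nonneg _ _ _ _) (hyF a b hab)
    -- choose ε
    have hP : Nonempty (Fin m × Fin n) := ⟨(⟨0, hm⟩, ⟨0, hn⟩)⟩
    set r : Fin m × Fin n → ℝ := fun p =>
      if 0 < x p.1 p.2 ∧ w p.1 p.2 < 0 then x p.1 p.2 / (-(w p.1 p.2)) else 1 with hr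
    have huniv : (Finset.univ : Finset (Fin m × Fin n)).Nonempty := Finset.univ_nonempty
    set ε : ℝ := Finset.univ.inf' huniv r with hε
    have hεpos : 0 < ε := by
      rw [hε, Finset.lt_inf'_iff]
      intro p _
      rw [hr]
      dsimp only
      split
      · rename_i hp
        exact div_pos hp.1 (by linarith [hp.2])
      · norm_num
    have hεle : ∀ p : Fin m × Fin n, ε ≤ r p := fun p => Finset.inf'_le r (Finset.mem_univ p)
    have hnn : ∀ a b, 0 ≤ x a b + ε * w a b := by
      intro a b
      by_cases hwn : 0 ≤ w a b
      · have := hx0 a b; nlinarith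
      · push_neg at hwn
        have hxF : (a, b) ∈ F := by
          by_contra hc; exact absurd (hwF a b hc) (by linarith)
        have hxpos : 0 < x a b := (hxs a b).1 hxF
        have hd : ε ≤ x a b / (-(w a b)) := by
          have h0 := hεle (a, b)
          rw [hr] at h0
          simp only at h0
          rwa [if_pos ⟨hxpos, hwn⟩] at h0
        rw [le_div_iff₀ (by linarith : (0:ℝ) < -(w a b))] at hd
        nlinarith
    refine ⟨fun a b => x a b + ε * w a b, ⟨hnn, ?_, ?_, ?_⟩, ?_⟩
    · intro a
      have : ∑ b, (x a b + ε * w a b) = (∑ b, x a b) + ε * ∑ b, w a b := by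
        rw [Finset.sum_add_distrib, Finset.mul_sum]
      rw [this, hxr a]
      have := hwd (Sum.inl a)
      simp only [divg, Sum.elim_inl] at this
      rw [this]; ring
    · intro b
      have : ∑ a, (x a b + ε * w a b) = (∑ a, x a b) + ε * ∑ a, w a b := by
        rw [Finset.sum_add_distrib, Finset.mul_sum]
      rw [this, hxc b]
      have := hwd (Sum.inr b)
      simp only [divg, Sum.elim_inr] at this
      rw [this]; ring
    · intro a b hab
      have hxab : x a b = 0 := hxz a b (fun h => hab (hEK h))
      show x a b + ε * w a b = 0
      rw [hxab, hwK a b hab]; ring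
    · have hxf : x f.1 f.2 = 0 := by
        by_contra hc
        exact hfF ((hxs f.1 f.2).2 (lt_of_le_of_ne (hx0 f.1 f.2) (Ne.symm hc)))
      simp only [hxf, zero_add]
      nlinarith


lemma rtg_of_rtg (α : Type*) {r s : α → α → Prop} (h : ∀ a b, r a b → ReflTransGen s a b)
    {a b : α} (hr : ReflTransGen r a b) : ReflTransGen s a b := by
  rw [← reflTransGen_idem (r := s)]; exact ReflTransGen.mono h _ _ hr

lemma transGen_union_decomp {α : Type*} {r s : α → α → Prop} {a b : α}
    (h : TransGen (fun x y => r x y ∨ s x y) a b) :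
    TransGen r a b ∨ ∃ p q, ReflTransGen (fun x y => r x y ∨ s x y) a p ∧ s p q ∧
      ReflTransGen (fun x y => r x y ∨ s x y) q b := by
  induction h with
  | single h =>
    rcases h with hr | hs
    · exact Or.inl (TransGen.single hr)
    · exact Or.inr ⟨a, _, ReflTransGen.refl, hs, ReflTransGen.refl⟩
  | @tail c d h1 hstep ih =>
    rcases ih with htr | ⟨p, q, hp1, hpq, hp2⟩
    · rcases hstep with hr | hs
      · exact Or.inl (htr.tail hr)
      · exact Or.inr ⟨c, d, ReflTransGen.mono (fun _ _ h => Or.inl h) _ _ htr.to_reflTransGen, hs,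
          ReflTransGen.refl⟩
    · exact Or.inr ⟨p, q, hp1, hpq, hp2.tail hstep⟩

def compRel (ν : Fin m → ℝ) (μ : Fin n → ℝ) (E K : Finset (Fin m × Fin n)) :
    (bipartiteGraph (E \ redundantEdges ν μ E)).ConnectedComponent →
    (bipartiteGraph (E \ redundantEdges ν μ E)).ConnectedComponent → Prop :=
  fun c c' => ∃ a b, (a, b) ∈ K ∧
    (bipartiteGraph (E \ redundantEdges ν μ E)).connectedComponentMk (Sum.inl a) = c ∧
    (bipartiteGraph (E \ redundantEdges ν μ E)).connectedComponentMk (Sum.inr b) = c'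

lemma comp_to_step (ν : Fin m → ℝ) (μ : Fin n → ℝ) (E K : Finset (Fin m × Fin n)) :
    ∀ c c', ReflTransGen (compRel ν μ E K) c c' →
    ∀ u v, (bipartiteGraph (E \ redundantEdges ν μ E)).connectedComponentMk u = c →
      (bipartiteGraph (E \ redundantEdges ν μ E)).connectedComponentMk v = c' →
      ReflTransGen (stepRel (E \ redundantEdges ν μ E) K) u v := by
  intro c c' h
  induction h with
  | refl =>
    intro u v hu hv
    exact reach_step (SimpleGraph.ConnectedComponent.eq.1 (hu.trans hv.symm))
  | @tail c₁ c₂ h1 hstep ih =>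
    intro u v hu hv
    obtain ⟨a, b, habK, ha, hb⟩ := hstep
    have h1' : ReflTransGen (stepRel (E \ redundantEdges ν μ E) K) u (Sum.inl a) :=
      ih u (Sum.inl a) hu ha
    have h2' : ReflTransGen (stepRel (E \ redundantEdges ν μ E) K) (Sum.inr b) v :=
      reach_step (SimpleGraph.ConnectedComponent.eq.1 (hb.trans hv.symm))
    exact (h1'.tail (Or.inr ⟨a, b, rfl, rfl, habK⟩)).trans h2'

lemma step_iff_comp (ν : Fin m → ℝ) (μ : Fin n → ℝ) (E K : Finset (Fin m × Fin n))
    (u v : Fin m ⊕ Fin n) :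
    ReflTransGen (stepRel (E \ redundantEdges ν μ E) K) u v ↔
    ReflTransGen (compRel ν μ E K)
      ((bipartiteGraph (E \ redundantEdges ν μ E)).connectedComponentMk u)
      ((bipartiteGraph (E \ redundantEdges ν μ E)).connectedComponentMk v) := by
  constructor
  · intro h
    induction h with
    | refl => exact ReflTransGen.refl
    | @tail c d h1 hstep ih =>
      rcases hstep with hadj | ⟨a, b, rfl, rfl, habK⟩
      · rwa [← SimpleGraph.ConnectedComponent.eq.2 hadj.reachable]
      · exact ih.tail ⟨a, b, habK, rfl, rfl⟩
  · intro h
    exact comp_to_step ν μ E K _ _ h u v rfl rfl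


theorem main_aux (hm : 1 ≤ m) (hn : 1 ≤ n)
    (ν : Fin m → ℝ) (μ : Fin n → ℝ) (E : Finset (Fin m × Fin n))
    (hν : ∀ i, 0 < ν i) (hμ : ∀ j, 0 < μ j)
    (hne : (transportationPolytope ν μ E).Nonempty)
    (i : Fin m) (j : Fin n) (hij : (i, j) ∉ E) :
    erpNumber ν μ (insert (i, j) E) =
      erpNumber ν μ E -
        ({l | Relation.TransGen (fun a b =>
            crpRel ν μ E a b ∨
              (a = (bipartiteGraph (E \ redundantEdges ν μ E)).connectedComponentMk (Sum.inl i) ∧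
               b = (bipartiteGraph (E \ redundantEdges ν μ E)).connectedComponentMk (Sum.inr j) ∧
               (bipartiteGraph (E \ redundantEdges ν μ E)).connectedComponentMk (Sum.inl i) ≠
                 (bipartiteGraph (E \ redundantEdges ν μ E)).connectedComponentMk (Sum.inr j)))
          l l}.ncard - 1) := by
  classical
  set F : Finset (Fin m × Fin n) := E \ redundantEdges ν μ E with hFdef
  set G : SimpleGraph (Fin m ⊕ Fin n) := bipartiteGraph F with hGdef
  set q : (Fin m ⊕ Fin n) → G.ConnectedComponent := G.connectedComponentMk with hqdef
  set l₁ : G.ConnectedComponent := q (Sum.inl i) with hl₁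
  set l₂ : G.ConnectedComponent := q (Sum.inr j) with hl₂
  set R' : G.ConnectedComponent → G.ConnectedComponent → Prop :=
    fun a b => crpRel ν μ E a b ∨ (a = l₁ ∧ b = l₂ ∧ l₁ ≠ l₂) with hR'
  set V : Set G.ConnectedComponent := {l | Relation.TransGen R' l l} with hV
  set E' : Finset (Fin m × Fin n) := insert (i, j) E with hE'
  have hEE' : E ⊆ E' := Finset.subset_insert _ _
  -- F is nonempty
  have hFne : F.Nonempty := by
    obtain ⟨x₀, hx₀⟩ := hne
    obtain ⟨h0, hr, hc, hz⟩ := hx₀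
    have hrow : 0 < ∑ b, x₀ ⟨0, hm⟩ b := by rw [hr]; exact hν _
    have : ∃ b, 0 < x₀ ⟨0, hm⟩ b := by
      by_contra hcon
      push_neg at hcon
      have : ∑ b, x₀ ⟨0, hm⟩ b ≤ 0 :=
        Finset.sum_nonpos (fun b _ => hcon b)
      linarith
    obtain ⟨b, hb⟩ := this
    have hbE : (⟨0, hm⟩, b) ∈ E := by
      by_contra hcon
      rw [hz _ b hcon] at hb; linarith
    refine ⟨(⟨0, hm⟩, b), Finset.mem_sdiff.2 ⟨hbE, fun hr' => ?_⟩⟩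
    rw [redundantEdges, Finset.mem_filter] at hr'
    have := hr'.2 x₀ ⟨h0, hr, hc, hz⟩
    simp only at this
    linarith
  obtain ⟨x, hx, hxs⟩ := exists_fullSupport ν μ E hFne
  -- correspondence between compRel chains and R' chains
  have hcomp_to_R' : ∀ c c', ReflTransGen (compRel ν μ E E') c c' → ReflTransGen R' c c' := by
    intro c c' h
    refine rtg_of_rtg _ ?_ h
    rintro a' b' ⟨p, r, hpr, hp, hr⟩
    by_cases heq : a' = b'
    · exact heq ▸ ReflTransGen.refl
    refine ReflTransGen.single ?_
    rw [hE', Finset.mem_insert] at hpr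
    rcases hpr with heq' | hprE
    · rw [Prod.mk.injEq] at heq'
      obtain ⟨rfl, rfl⟩ := heq'
      have ha' : a' = l₁ := by rw [← hp, hl₁, hqdef]
      have hb' : b' = l₂ := by rw [← hr, hl₂, hqdef]
      exact Or.inr ⟨ha', hb', by rw [← ha', ← hb']; exact heq⟩
    · exact Or.inl ⟨heq, p, r, hprE, hp, hr⟩
  have hR'_to_comp : ∀ c c', ReflTransGen R' c c' → ReflTransGen (compRel ν μ E E') c c' := by
    intro c c' h
    refine rtg_of_rtg _ ?_ h
    rintro a' b' (⟨hne', p, r, hprE, hp, hr⟩ | ⟨rfl, rfl, hne'⟩)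
    · exact ReflTransGen.single ⟨p, r, hEE' hprE, hp, hr⟩
    · exact ReflTransGen.single ⟨i, j, Finset.mem_insert_self _ _, rfl, rfl⟩
  -- characterization of the new nonredundant edge set
  have hTne' : (transportationPolytope ν μ E').Nonempty :=
    ⟨x, poly_mono hEE' hx⟩
  have hchar : ∀ a b, ((a, b) ∈ E' \ redundantEdges ν μ E' ↔
      (a, b) ∈ E' ∧ ReflTransGen R' (q (Sum.inr b)) (q (Sum.inl a))) := by
    intro a b
    rw [Finset.mem_sdiff, redundantEdges, Finset.mem_filter]
    constructor
    · rintro ⟨habE', hred⟩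
      refine ⟨habE', ?_⟩
      have hex : ∃ z ∈ transportationPolytope ν μ E', 0 < z a b := by
        by_contra hcon
        push_neg at hcon
        refine hred ⟨habE', fun z hz => ?_⟩
        exact le_antisymm (hcon z hz) (hz.1 a b)
      have := (nonredundant_iff hm hn ν μ E E' hEE' x hx hxs (a, b) habE').1 hex
      have h2 := (step_iff_comp ν μ E E' (Sum.inr b) (Sum.inl a)).1 this
      exact hcomp_to_R' _ _ h2
    · rintro ⟨habE', hrtg⟩
      refine ⟨habE', fun hmem => ?_⟩
      have h2 := hR'_to_comp _ _ hrtg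
      have h3 := (step_iff_comp ν μ E E' (Sum.inr b) (Sum.inl a)).2 h2
      obtain ⟨z, hz, hzab⟩ :=
        (nonredundant_iff hm hn ν μ E E' hEE' x hx hxs (a, b) habE').2 h3
      have := hmem.2 z hz
      simp only at this
      linarith
  -- acyclicity of crpRel
  have hacyc : ∀ c, ¬ TransGen (crpRel ν μ E) c c := by
    intro c hc
    rw [TransGen.head'_iff] at hc
    obtain ⟨c₁, hstep, hrest⟩ := hc
    obtain ⟨hnec, a, b, hab, ha, hb⟩ := hstep
    have hcomp : ReflTransGen (compRel ν μ E E) (q (Sum.inr b)) (q (Sum.inl a)) := by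
      rw [hqdef, ha, hb]
      exact ReflTransGen.mono (fun _ _ hcr => ⟨_, _, hcr.2.choose_spec.choose_spec.1,
        hcr.2.choose_spec.choose_spec.2.1, hcr.2.choose_spec.choose_spec.2.2⟩) _ _ hrest
    have hstep' := (step_iff_comp ν μ E E (Sum.inr b) (Sum.inl a)).2 hcomp
    obtain ⟨z, hz, hzab⟩ :=
      (nonredundant_iff hm hn ν μ E E subset_rfl x hx hxs (a, b) hab).2 hstep'
    have habF : (a, b) ∈ F := by
      rw [hFdef, Finset.mem_sdiff]
      refine ⟨hab, fun hr' => ?_⟩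
      rw [redundantEdges, Finset.mem_filter] at hr'
      have := hr'.2 z hz
      simp only at this
      linarith
    have hadj : G.Adj (Sum.inl a) (Sum.inr b) := by
      rw [hGdef, bip_adj']
      exact ⟨a, b, habF, Or.inl ⟨rfl, rfl⟩⟩
    have : c = c₁ := by
      rw [← ha, ← hb]
      exact SimpleGraph.ConnectedComponent.eq.2 hadj.reachable
    exact hnec this
  -- decomposition of cycles in R'
  have hdecomp : ∀ c ∈ V, ReflTransGen R' c l₁ ∧ ReflTransGen R' l₂ c ∧ l₁ ≠ l₂ := by
    intro c hc
    rw [hV, Set.mem_setOf_eq] at hc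
    rcases transGen_union_decomp hc with hcyc | ⟨p, r, h1, ⟨rfl, rfl, hne'⟩, h2⟩
    · exact absurd hcyc (hacyc c)
    · exact ⟨h1, h2, hne'⟩
  -- the new graph
  set G' : SimpleGraph (Fin m ⊕ Fin n) :=
    bipartiteGraph (E' \ redundantEdges ν μ E') with hG'def
  have hFF' : F ⊆ E' \ redundantEdges ν μ E' := by
    intro f hf
    obtain ⟨a, b⟩ := f
    have hadj : G.Adj (Sum.inl a) (Sum.inr b) := by
      rw [hGdef, bip_adj']
      exact ⟨a, b, hf, Or.inl ⟨rfl, rfl⟩⟩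
    have heq : q (Sum.inr b) = q (Sum.inl a) := by
      rw [hqdef]
      exact (SimpleGraph.ConnectedComponent.eq.2 hadj.reachable).symm
    rw [hchar a b]
    refine ⟨hEE' (by rw [hFdef] at hf; exact (Finset.mem_sdiff.1 hf).1), ?_⟩
    rw [heq]
  have hle : G ≤ G' := by
    intro u v hadj
    rw [hGdef, bip_adj'] at hadj
    rw [hG'def, bip_adj']
    obtain ⟨a, b, habF, hor⟩ := hadj
    exact ⟨a, b, hFF' habF, hor⟩
  -- the projection map
  set π : G.ConnectedComponent → G'.ConnectedComponent :=
    SimpleGraph.ConnectedComponent.lift (fun u => G'.connectedComponentMk u)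
      (fun v w p _ => SimpleGraph.ConnectedComponent.eq.2 (p.reachable.mono hle)) with hπ
  have hπmk : ∀ u, π (q u) = G'.connectedComponentMk u := fun u => by
    rw [hπ, hqdef]
    exact SimpleGraph.ConnectedComponent.lift_mk
  -- single-step merge
  have hstep_merge : ∀ c c', R' c c' → ReflTransGen R' c' c → π c = π c' := by
    intro c c' hstep hback
    have hedge : ∃ a b, (a, b) ∈ E' ∧ q (Sum.inl a) = c ∧ q (Sum.inr b) = c' := by
      rcases hstep with ⟨hne', a, b, hab, ha, hb⟩ | ⟨rfl, rfl, hne'⟩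
      · exact ⟨a, b, hEE' hab, ha, hb⟩
      · exact ⟨i, j, Finset.mem_insert_self _ _, rfl, rfl⟩
    obtain ⟨a, b, habE', ha, hb⟩ := hedge
    have habF' : (a, b) ∈ E' \ redundantEdges ν μ E' := by
      rw [hchar a b]
      exact ⟨habE', by rw [ha, hb]; exact hback⟩
    have hadj : G'.Adj (Sum.inl a) (Sum.inr b) := by
      rw [hG'def, bip_adj']
      exact ⟨a, b, habF', Or.inl ⟨rfl, rfl⟩⟩
    rw [← ha, ← hb, hπmk, hπmk]
    exact SimpleGraph.ConnectedComponent.eq.2 hadj.reachable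
  -- mutual reachability merge
  have hmerge : ∀ c c', ReflTransGen R' c c' → ReflTransGen R' c' c → π c = π c' := by
    intro c c' h
    induction h with
    | refl => intro _; rfl
    | @tail c₁ c₂ h1 hstep ih =>
      intro hback
      have h1' : ReflTransGen R' c₁ c := ReflTransGen.head hstep hback
      have h2' : ReflTransGen R' c₂ c₁ := hback.trans h1
      exact (ih h1').trans (hstep_merge c₁ c₂ hstep h2')
  have hVmerge : ∀ a ∈ V, ∀ b ∈ V, π a = π b := by
    intro a ha b hb
    obtain ⟨ha1, ha2, hne'⟩ := hdecomp a ha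
    obtain ⟨hb1, hb2, _⟩ := hdecomp b hb
    have hR'12 : R' l₁ l₂ := Or.inr ⟨rfl, rfl, hne'⟩
    exact hmerge a b ((ha1.tail hR'12).trans hb2) ((hb1.tail hR'12).trans ha2)
  -- projecting adjacency in G'
  have hadj_quot : ∀ u v, G'.Adj u v → (q u = q v ∨ (q u ∈ V ∧ q v ∈ V)) := by
    intro u v hadj
    rw [hG'def, bip_adj'] at hadj
    obtain ⟨a, b, habF', hor⟩ := hadj
    rw [hchar a b] at habF'
    obtain ⟨habE', hback⟩ := habF'
    by_cases hqe : q (Sum.inl a) = q (Sum.inr b)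
    · rcases hor with ⟨rfl, rfl⟩ | ⟨rfl, rfl⟩
      · exact Or.inl hqe
      · exact Or.inl hqe.symm
    · have hR'ab : R' (q (Sum.inl a)) (q (Sum.inr b)) := by
        rw [hE', Finset.mem_insert] at habE'
        rcases habE' with heq' | habE
        · rw [Prod.mk.injEq] at heq'
          obtain ⟨rfl, rfl⟩ := heq'
          exact Or.inr ⟨rfl, rfl, hqe⟩
        · exact Or.inl ⟨hqe, a, b, habE, rfl, rfl⟩
      have hVa : q (Sum.inl a) ∈ V := by
        rw [hV, Set.mem_setOf_eq]
        exact TransGen.head' hR'ab hback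
      have hVb : q (Sum.inr b) ∈ V := by
        rw [hV, Set.mem_setOf_eq]
        exact TransGen.tail' hback hR'ab
      rcases hor with ⟨rfl, rfl⟩ | ⟨rfl, rfl⟩
      · exact Or.inr ⟨hVa, hVb⟩
      · exact Or.inr ⟨hVb, hVa⟩
  have hreach_quot : ∀ u v, G'.Reachable u v → (q u = q v ∨ (q u ∈ V ∧ q v ∈ V)) := by
    intro u v hr
    obtain ⟨p⟩ := hr
    induction p with
    | nil => exact Or.inl rfl
    | @cons u u' v hadj p ih =>
      rcases hadj_quot u u' hadj with heq | ⟨h1, h2⟩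
      · rcases ih with heq2 | ⟨h3, h4⟩
        · exact Or.inl (heq.trans heq2)
        · exact Or.inr ⟨heq ▸ h3, h4⟩
      · rcases ih with heq2 | ⟨h3, h4⟩
        · exact Or.inr ⟨h1, heq2 ▸ h2⟩
        · exact Or.inr ⟨h1, h4⟩
  -- the setoid collapsing V
  set sv : Setoid G.ConnectedComponent :=
    ⟨fun a b => a = b ∨ (a ∈ V ∧ b ∈ V),
      ⟨fun _ => Or.inl rfl,
       fun h => by rcases h with rfl | ⟨h1, h2⟩; exacts [Or.inl rfl, Or.inr ⟨h2, h1⟩],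
       fun h1 h2 => by
        rcases h1 with rfl | ⟨ha, hb⟩
        · exact h2
        · rcases h2 with rfl | ⟨hb', hc⟩
          exacts [Or.inr ⟨ha, hb⟩, Or.inr ⟨ha, hc⟩]⟩⟩ with hsv
  -- the equivalence between new components and the quotient
  set α : G'.ConnectedComponent → Quotient sv :=
    SimpleGraph.ConnectedComponent.lift (fun u => Quotient.mk sv (q u))
      (fun v w p _ => Quotient.sound (hreach_quot v w p.reachable)) with hα
  set β : Quotient sv → G'.ConnectedComponent :=
    Quotient.lift π (fun a b hab => by
      rcases hab with rfl | ⟨ha, hb⟩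
      · rfl
      · exact hVmerge a ha b hb) with hβ
  have hβα : ∀ x : G'.ConnectedComponent, β (α x) = x := by
    refine SimpleGraph.ConnectedComponent.ind (fun u => ?_)
    rw [hα]
    rw [SimpleGraph.ConnectedComponent.lift_mk]
    rw [hβ]
    show π (q u) = _
    exact hπmk u
  have hαβ : ∀ y : Quotient sv, α (β y) = y := by
    refine Quotient.ind (fun c => ?_)
    refine SimpleGraph.ConnectedComponent.ind (fun u => ?_) c
    show α (β (Quotient.mk sv (q u))) = _
    have : β (Quotient.mk sv (q u)) = π (q u) := rfl
    rw [this, hπmk u, hα, SimpleGraph.ConnectedComponent.lift_mk]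
  have hcardeq : Nat.card G'.ConnectedComponent = Nat.card (Quotient sv) :=
    Nat.card_congr ⟨α, β, hβα, hαβ⟩
  -- final counting
  have hgoal : erpNumber ν μ E' = Nat.card G'.ConnectedComponent := rfl
  have hgoal2 : erpNumber ν μ E = Nat.card G.ConnectedComponent := rfl
  rw [hgoal, hgoal2, hcardeq]
  have hVfin : V.Finite := Set.toFinite V
  by_cases hVe : V = ∅
  · have hn0 : V.ncard = 0 := by rw [hVe]; exact Set.ncard_empty _
    rw [hn0]
    simp only [Nat.zero_sub, Nat.sub_zero]
    have e2 : Quotient sv ≃ G.ConnectedComponent := by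
      refine ⟨Quotient.lift id (fun a b hab => ?_), Quotient.mk sv, ?_, ?_⟩
      · rcases hab with rfl | ⟨ha, _⟩
        · rfl
        · rw [hVe] at ha; exact absurd ha (Set.notMem_empty _)
      · exact Quotient.ind (fun a => rfl)
      · exact fun a => rfl
    exact Nat.card_congr e2
  · have hVne' : V.Nonempty := Set.nonempty_iff_ne_empty.2 hVe
    obtain ⟨v₀, hv₀⟩ := hVne'
    set tof : G.ConnectedComponent → (↥(Vᶜ) ⊕ Unit) :=
      (fun a => if h : a ∈ V then Sum.inr () else Sum.inl ⟨a, h⟩) with htof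
    have htof_pos : ∀ a (h : a ∈ V), tof a = Sum.inr () := fun a h => dif_pos h
    have htof_neg : ∀ a (h : a ∉ V), tof a = Sum.inl ⟨a, h⟩ := fun a h => dif_neg h
    have e3 : Quotient sv ≃ (↥(Vᶜ) ⊕ Unit) := by
      refine ⟨Quotient.lift tof ?_,
        Sum.elim (fun a => Quotient.mk sv a.1) (fun _ => Quotient.mk sv v₀), ?_, ?_⟩
      · intro a b hab
        rcases hab with rfl | ⟨ha, hb⟩
        · rfl
        · rw [htof_pos a ha, htof_pos b hb]
      · refine Quotient.ind (fun a => ?_)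
        by_cases h : a ∈ V
        · show Sum.elim _ _ (tof a) = _
          rw [htof_pos a h]
          exact Quotient.sound (Or.inr ⟨hv₀, h⟩)
        · show Sum.elim _ _ (tof a) = _
          rw [htof_neg a h]
          rfl
      · rintro (⟨a, ha⟩ | u)
        · show tof a = _
          exact htof_neg a ha
        · cases u
          show tof v₀ = _
          exact htof_pos v₀ hv₀
    rw [Nat.card_congr e3, Nat.card_sum]
    have h1 : Nat.card ↥(Vᶜ) = Vᶜ.ncard := Nat.card_coe_set_eq _
    have h2 : V.ncard + Vᶜ.ncard = Nat.card G.ConnectedComponent :=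
      Set.ncard_add_ncard_compl V
    have h3 : 1 ≤ V.ncard := (Set.ncard_pos hVfin).2 ⟨v₀, hv₀⟩
    have h4 : Nat.card Unit = 1 := Nat.card_unique
    rw [h1, h4]
    omega

end Stmt16

/-- adding one edge: adding `(i,j) ∉ E` decreases the ERP number by
`max(|V_c| − 1, 0)`, where `V_c` is the set of CRP components lying on a cycle of the
CRP-graph augmented with the arc `(l₁, l₂)` of the new edge. -/
theorem stmt_16 {m n : ℕ} (hm : 1 ≤ m) (hn : 1 ≤ n)
    (ν : Fin m → ℝ) (μ : Fin n → ℝ) (E : Finset (Fin m × Fin n))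
    (hν : ∀ i, 0 < ν i) (hμ : ∀ j, 0 < μ j)
    (hne : (transportationPolytope ν μ E).Nonempty)
    (i : Fin m) (j : Fin n) (hij : (i, j) ∉ E) :
    let G := bipartiteGraph (E \ redundantEdges ν μ E)
    let l₁ := G.connectedComponentMk (Sum.inl i)
    let l₂ := G.connectedComponentMk (Sum.inr j)
    let R' : G.ConnectedComponent → G.ConnectedComponent → Prop :=
      fun a b => crpRel ν μ E a b ∨ (a = l₁ ∧ b = l₂ ∧ l₁ ≠ l₂)
    erpNumber ν μ (insert (i, j) E) =
      erpNumber ν μ E - ({l | Relation.TransGen R' l l}.ncard - 1) := by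
  intro G l₁ l₂ R'
  exact Stmt16.main_aux hm hn ν μ E hν hμ hne i j hij
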